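/- Let g, g^n : ℝ^{d+1} → ℝ be measurable with linear growth |g(x)|, |g^n(x)| ≤ C(1+|x|) uniformly in n, and g^n → g in L^{(d+1)p}_{loc}(ℝ^{d+1}) for some p ≥ 1. Let X be a continuous ℝ^{d+1}-valued process satisfying the Krylov estimate: for every N there is K(t,N,d) such that E∫₀ᵗ h(X_r)1_{sup_{s≤r}|X_s|≤N} dr ≤ K(t,N,d)‖h‖_{L^{d+1}(B_N)} for all nonnegative measurable h supported in B_N, and E sup_{s≤t}|X_s|^{2p} < ∞. Then E∫₀ᵗ|g^n(X_r) − g(X_r)|^p dr → 0 as n → ∞. -/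

import Mathlib

open MeasureTheory Filter Metric

open scoped ENNReal NNReal

lemma biSup_Icc_eq_iSup_rat (f : ℝ → ℝ≥0∞) (hf : Continuous f) (t : ℝ) (ht : 0 ≤ t) :
    (⨆ s ∈ Set.Icc (0:ℝ) t, f s) = ⨆ q : ℚ, f (max 0 (min t ↑q)) := by
  apply le_antisymm
  · refine iSup₂_le fun s hs => ?_
    have hg : Continuous fun u : ℝ => f (max 0 (min t u)) :=
      hf.comp (continuous_const.max (continuous_const.min continuous_id))
    have hs' : max 0 (min t s) = s := by
      rw [min_eq_right hs.2, max_eq_right hs.1]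
    have hdense : ∀ x : ℝ, f (max 0 (min t x)) ≤ ⨆ q : ℚ, f (max 0 (min t ↑q)) := by
      intro x
      obtain ⟨u, hu_mem, hu_lim⟩ :=
        mem_closure_iff_seq_limit.mp (Rat.denseRange_cast (𝕜 := ℝ) x)
      refine le_of_tendsto ((hg.tendsto x).comp hu_lim) ?_
      refine Eventually.of_forall fun n => ?_
      obtain ⟨q, hq⟩ := hu_mem n
      simpa [Function.comp, ← hq] using le_iSup (fun q : ℚ => f (max 0 (min t ↑q))) q
    calc f s = f (max 0 (min t s)) := by rw [hs']
    _ ≤ _ := hdense s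
  · refine iSup_le fun q => ?_
    have hmem : max 0 (min t ↑q) ∈ Set.Icc (0:ℝ) t :=
      ⟨le_max_left _ _, max_le ht (min_le_left _ _)⟩
    exact le_biSup f hmem

/-- Proposition 4.2: if `gⁿ → g` in `L^{(d+1)p}_loc`, `g, gⁿ` have uniform linear growth, and
the process `X` has finite moments and satisfies a Krylov-type estimate, then
`E ∫₀ᵗ |gⁿ(X_r) − g(X_r)|^p dr → 0`. -/
theorem stmt_12 (d : ℕ) (p t : ℝ) (hp : 1 ≤ p) (ht : 0 < t)
    {Ω : Type*} [MeasurableSpace Ω] (μ : Measure Ω) [IsProbabilityMeasure μ]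
    (X : ℝ → Ω → EuclideanSpace ℝ (Fin (d + 1)))
    (hX_cont : ∀ ω, Continuous fun s => X s ω)
    (hX_meas : ∀ s, Measurable (X s))
    (g : EuclideanSpace ℝ (Fin (d + 1)) → ℝ)
    (gn : ℕ → EuclideanSpace ℝ (Fin (d + 1)) → ℝ)
    (C : ℝ)
    (hg_meas : Measurable g) (hgn_meas : ∀ n, Measurable (gn n))
    (hg_growth : ∀ x, |g x| ≤ C * (1 + ‖x‖))
    (hgn_growth : ∀ n x, |gn n x| ≤ C * (1 + ‖x‖))
    -- convergence gⁿ → g in L^{(d+1)p}_loc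
    (hconv : ∀ N > (0:ℝ), Tendsto
      (fun n => ∫⁻ x in closedBall (0 : EuclideanSpace ℝ (Fin (d + 1))) N,
        ENNReal.ofReal (|gn n x - g x| ^ ((d + 1 : ℝ) * p))) atTop (nhds 0))
    -- Krylov estimate for X
    (hkrylov : ∀ N > (0:ℝ), ∃ K ≥ (0:ℝ),
      ∀ h : EuclideanSpace ℝ (Fin (d + 1)) → ℝ, Measurable h → (∀ x, 0 ≤ h x) →
        (∀ x, N < ‖x‖ → h x = 0) →
        (∫⁻ ω, ∫⁻ r in Set.Ioc (0:ℝ) t,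
            Set.indicator {q : ℝ × Ω | ∀ s ∈ Set.Icc (0:ℝ) q.1, ‖X s q.2‖ ≤ N}
              (fun q => ENNReal.ofReal (h (X q.1 q.2))) (r, ω) ∂volume ∂μ) ≤
          ENNReal.ofReal K *
            (∫⁻ x in closedBall (0 : EuclideanSpace ℝ (Fin (d + 1))) N,
              ENNReal.ofReal (h x ^ (d + 1 : ℝ))) ^ (1 / (d + 1 : ℝ)))
    -- moment bound on sup of X
    (hmom : (∫⁻ ω, (⨆ s ∈ Set.Icc (0:ℝ) t, ENNReal.ofReal ‖X s ω‖) ^ (2 * p) ∂μ) < ⊤) :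
    Tendsto (fun n => ∫⁻ ω, ∫⁻ r in Set.Ioc (0:ℝ) t,
        ENNReal.ofReal (|gn n (X r ω) - g (X r ω)| ^ p) ∂volume ∂μ)
      atTop (nhds 0) := by
  have hp0 : (0:ℝ) ≤ p := le_trans zero_le_one hp
  have hC : (0:ℝ) ≤ C := le_trans (abs_nonneg (g 0)) (by simpa using hg_growth 0)
  set c : ℝ≥0∞ := ENNReal.ofReal (2*C) with hcdef
  set M : Ω → ℝ≥0∞ := fun ω => ⨆ s ∈ Set.Icc (0:ℝ) t, ENNReal.ofReal ‖X s ω‖ with hMdef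
  have hmom' : (∫⁻ ω, M ω ^ (2 * p) ∂μ) < ⊤ := hmom
  have hM_meas : Measurable M := by
    have hMeq : M = fun ω => ⨆ q : ℚ, ENNReal.ofReal ‖X (max 0 (min t ↑q)) ω‖ := by
      funext ω
      exact biSup_Icc_eq_iSup_rat (fun s => ENNReal.ofReal ‖X s ω‖)
        (ENNReal.continuous_ofReal.comp (hX_cont ω).norm) t ht.le
    rw [hMeq]
    exact Measurable.iSup fun q => ((hX_meas _).norm).ennreal_ofReal
  have hMle : ∀ ω, ∀ u ∈ Set.Icc (0:ℝ) t, ENNReal.ofReal ‖X u ω‖ ≤ M ω :=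
    fun ω u hu => le_biSup (fun s => ENNReal.ofReal ‖X s ω‖) hu
  set G : Ω → ℝ≥0∞ := fun ω => (1 + M ω) ^ (2*p) with hGdef
  have hG_meas : Measurable G := (measurable_const.add hM_meas).pow measurable_const
  set J : ℝ≥0∞ := ∫⁻ ω, G ω ∂μ with hJdef
  have hJ : J ≠ ⊤ := by
    have hpt : ∀ ω, G ω ≤ (2:ℝ≥0∞)^(2*p) * (1 + M ω ^ (2*p)) := by
      intro ω
      have h1 : (1:ℝ≥0∞) + M ω ≤ 2 * max 1 (M ω) := by
        rw [two_mul]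
        exact add_le_add (le_max_left _ _) (le_max_right _ _)
      have h2 : G ω ≤ (2 * max 1 (M ω))^(2*p) :=
        ENNReal.rpow_le_rpow h1 (by linarith)
      have h3 : (2 * max 1 (M ω))^(2*p) = (2:ℝ≥0∞)^(2*p) * (max 1 (M ω))^(2*p) :=
        ENNReal.mul_rpow_of_nonneg _ _ (by linarith)
      have h4 : (max 1 (M ω))^(2*p) ≤ 1 + M ω ^ (2*p) := by
        rcases le_total (M ω) 1 with hle | hle
        · rw [max_eq_left hle, ENNReal.one_rpow]
          exact le_self_add
        · rw [max_eq_right hle]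
          exact le_add_self
      calc G ω ≤ (2 * max 1 (M ω))^(2*p) := h2
      _ = (2:ℝ≥0∞)^(2*p) * (max 1 (M ω))^(2*p) := h3
      _ ≤ (2:ℝ≥0∞)^(2*p) * (1 + M ω ^ (2*p)) := mul_le_mul_right h4 _
    have h2top : ((2:ℝ≥0∞))^(2*p) ≠ ⊤ :=
      ENNReal.rpow_ne_top_of_nonneg (by linarith) (by simp)
    have : J ≤ (2:ℝ≥0∞)^(2*p) * (1 + ∫⁻ ω, M ω ^ (2*p) ∂μ) := by
      calc J ≤ ∫⁻ ω, (2:ℝ≥0∞)^(2*p) * (1 + M ω ^ (2*p)) ∂μ := lintegral_mono hpt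
      _ = (2:ℝ≥0∞)^(2*p) * ∫⁻ ω, (1 + M ω ^ (2*p)) ∂μ :=
          lintegral_const_mul' _ _ h2top
      _ = (2:ℝ≥0∞)^(2*p) * (1 + ∫⁻ ω, M ω ^ (2*p) ∂μ) := by
          rw [lintegral_add_left measurable_const, lintegral_const, measure_univ, mul_one]
    refine ne_top_of_le_ne_top ?_ this
    exact ENNReal.mul_ne_top h2top (by simp [ENNReal.add_ne_top, hmom'.ne])
  rw [ENNReal.tendsto_atTop_zero]
  intro ε hε
  rcases eq_or_ne ε ⊤ with rfl | hεtop
  · exact ⟨0, fun n _ => le_top⟩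
  have hε2 : ε / 2 ≠ 0 := by
    simp [ENNReal.div_eq_zero_iff, hε.ne']
  have hε2top : ε / 2 ≠ ⊤ := by
    simp [ENNReal.div_eq_top, hεtop]
  set E : ℝ≥0∞ := c^p * ENNReal.ofReal t * J with hEdef
  have hE : E ≠ ⊤ :=
    ENNReal.mul_ne_top
      (ENNReal.mul_ne_top (ENNReal.rpow_ne_top_of_nonneg hp0 ENNReal.ofReal_ne_top)
        ENNReal.ofReal_ne_top) hJ
  set N : ℝ := max 1 ((E / (ε/2)).toReal + 1) with hNdef
  have hN : (0:ℝ) < N := lt_of_lt_of_le one_pos (le_max_left _ _)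
  set cN : ℝ≥0∞ := (1 + ENNReal.ofReal N)^p with hcNdef
  have hcN0 : cN ≠ 0 := by
    apply ne_of_gt
    apply ENNReal.rpow_pos (by simp) (by simp [ENNReal.add_ne_top])
  have hcNtop : cN ≠ ⊤ :=
    ENNReal.rpow_ne_top_of_nonneg hp0 (by simp [ENNReal.add_ne_top])
  have htail : E / cN ≤ ε / 2 := by
    have hfin : E / (ε/2) ≠ ⊤ := by
      simp [ENNReal.div_eq_top, hE, hε2]
    have h1 : E / (ε/2) ≤ ENNReal.ofReal N := by
      calc E / (ε/2) = ENNReal.ofReal ((E / (ε/2)).toReal) :=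
            (ENNReal.ofReal_toReal hfin).symm
      _ ≤ ENNReal.ofReal ((E / (ε/2)).toReal + 1) :=
            ENNReal.ofReal_le_ofReal (by linarith)
      _ ≤ ENNReal.ofReal N := ENNReal.ofReal_le_ofReal (le_max_right _ _)
    have h2 : ENNReal.ofReal N ≤ cN := by
      calc ENNReal.ofReal N ≤ 1 + ENNReal.ofReal N := le_add_self
      _ = (1 + ENNReal.ofReal N)^(1:ℝ) := (ENNReal.rpow_one _).symm
      _ ≤ cN := ENNReal.rpow_le_rpow_of_exponent_le (by simp) hp
    have h3 : E ≤ (ε/2) * cN := by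
      calc E = (ε/2) * (E / (ε/2)) := (ENNReal.mul_div_cancel hε2 hε2top).symm
      _ ≤ (ε/2) * cN := mul_le_mul_right (h1.trans h2) _
    exact ENNReal.div_le_of_le_mul h3
  obtain ⟨K, hK0, hKry⟩ := hkrylov N hN
  set hh : ℕ → EuclideanSpace ℝ (Fin (d + 1)) → ℝ :=
    fun n x => if ‖x‖ ≤ N then |gn n x - g x| ^ p else 0 with hhdef
  have hh_meas : ∀ n, Measurable (hh n) := fun n =>
    Measurable.ite (measurableSet_le measurable_norm measurable_const)
      (((hgn_meas n).sub hg_meas).abs.pow measurable_const) measurable_const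
  have hh_nonneg : ∀ n x, 0 ≤ hh n x := by
    intro n x
    simp only [hhdef]
    split
    · exact Real.rpow_nonneg (abs_nonneg _) p
    · exact le_refl 0
  have hh_supp : ∀ n x, N < ‖x‖ → hh n x = 0 := by
    intro n x hx
    simp only [hhdef]
    rw [if_neg (not_le.mpr hx)]
  have hhi : ∀ n, (∫⁻ x in closedBall (0 : EuclideanSpace ℝ (Fin (d + 1))) N,
      ENNReal.ofReal (hh n x ^ (d + 1 : ℝ)))
      = ∫⁻ x in closedBall (0 : EuclideanSpace ℝ (Fin (d + 1))) N,
        ENNReal.ofReal (|gn n x - g x| ^ ((d + 1 : ℝ) * p)) := by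
    intro n
    refine setLIntegral_congr_fun measurableSet_closedBall ?_
    intro x hx
    have hxN : ‖x‖ ≤ N := mem_closedBall_zero_iff.mp hx
    simp only [hhdef, if_pos hxN]
    rw [mul_comm ((d:ℝ) + 1) p, Real.rpow_mul (abs_nonneg _)]
  have hd1 : (0:ℝ) < (d:ℝ) + 1 := by positivity
  set δ : ℝ≥0∞ := ((ε/2) / (ENNReal.ofReal K + 1)) ^ ((d:ℝ) + 1) with hδdef
  have hδ : 0 < δ := by
    apply ENNReal.rpow_pos
    · exact ENNReal.div_pos hε2 (by simp [ENNReal.add_ne_top])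
    · exact (ENNReal.div_lt_top hε2top (by simp)).ne
  obtain ⟨n0, hn0⟩ := (ENNReal.tendsto_atTop_zero.mp (hconv N hN)) δ hδ
  refine ⟨n0, fun n hn => ?_⟩
  -- the key splitting bound
  have key : (∫⁻ ω, ∫⁻ r in Set.Ioc (0:ℝ) t,
        ENNReal.ofReal (|gn n (X r ω) - g (X r ω)| ^ p) ∂volume ∂μ)
      ≤ (∫⁻ ω, ∫⁻ r in Set.Ioc (0:ℝ) t,
          Set.indicator {q : ℝ × Ω | ∀ s ∈ Set.Icc (0:ℝ) q.1, ‖X s q.2‖ ≤ N}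
            (fun q => ENNReal.ofReal (hh n (X q.1 q.2))) (r, ω) ∂volume ∂μ) + E / cN := by
    have inner : ∀ ω, (∫⁻ r in Set.Ioc (0:ℝ) t,
        ENNReal.ofReal (|gn n (X r ω) - g (X r ω)| ^ p) ∂volume)
        ≤ (∫⁻ r in Set.Ioc (0:ℝ) t,
            Set.indicator {q : ℝ × Ω | ∀ s ∈ Set.Icc (0:ℝ) q.1, ‖X s q.2‖ ≤ N}
              (fun q => ENNReal.ofReal (hh n (X q.1 q.2))) (r, ω) ∂volume)
          + (c^p * G ω / cN) * ENNReal.ofReal t := by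
      intro ω
      have hptw : ∀ r ∈ Set.Ioc (0:ℝ) t,
          ENNReal.ofReal (|gn n (X r ω) - g (X r ω)| ^ p)
          ≤ Set.indicator {q : ℝ × Ω | ∀ s ∈ Set.Icc (0:ℝ) q.1, ‖X s q.2‖ ≤ N}
              (fun q => ENNReal.ofReal (hh n (X q.1 q.2))) (r, ω) + c^p * G ω / cN := by
        intro r hr
        by_cases hS : ((r,ω) : ℝ × Ω) ∈
            {q : ℝ × Ω | ∀ s ∈ Set.Icc (0:ℝ) q.1, ‖X s q.2‖ ≤ N}
        · rw [Set.indicator_of_mem hS]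
          have hxN : ‖X r ω‖ ≤ N := hS r ⟨hr.1.le, le_refl r⟩
          have hEq : hh n (X r ω) = |gn n (X r ω) - g (X r ω)| ^ p := if_pos hxN
          rw [hEq]
          exact le_self_add
        · rw [Set.indicator_of_notMem hS, zero_add]
          simp only [Set.mem_setOf_eq, not_forall] at hS
          obtain ⟨s, hs_mem, hs⟩ := hS
          push_neg at hs
          have hsM : ENNReal.ofReal N ≤ M ω := by
            refine le_trans (ENNReal.ofReal_le_ofReal hs.le) ?_
            exact hMle ω s ⟨hs_mem.1, hs_mem.2.trans hr.2⟩
          have habs : |gn n (X r ω) - g (X r ω)| ≤ 2*C*(1+‖X r ω‖) := by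
            have := hgn_growth n (X r ω)
            have := hg_growth (X r ω)
            calc |gn n (X r ω) - g (X r ω)| ≤ |gn n (X r ω)| + |g (X r ω)| :=
                abs_sub _ _
            _ ≤ 2*C*(1+‖X r ω‖) := by linarith
          have h1 : ENNReal.ofReal (|gn n (X r ω) - g (X r ω)| ^ p)
              ≤ (c * (1 + M ω))^p := by
            calc ENNReal.ofReal (|gn n (X r ω) - g (X r ω)| ^ p)
                ≤ ENNReal.ofReal ((2*C*(1+‖X r ω‖))^p) :=
                  ENNReal.ofReal_le_ofReal
                    (Real.rpow_le_rpow (abs_nonneg _) habs hp0)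
            _ = (ENNReal.ofReal (2*C*(1+‖X r ω‖)))^p :=
                  (ENNReal.ofReal_rpow_of_nonneg (by positivity) hp0).symm
            _ ≤ (c * (1 + M ω))^p := by
                  apply ENNReal.rpow_le_rpow _ hp0
                  rw [ENNReal.ofReal_mul (by positivity)]
                  apply mul_le_mul_right
                  calc ENNReal.ofReal (1+‖X r ω‖)
                      = 1 + ENNReal.ofReal ‖X r ω‖ := by
                        rw [ENNReal.ofReal_add zero_le_one (norm_nonneg _),
                          ENNReal.ofReal_one]
                  _ ≤ 1 + M ω := add_le_add_right (hMle ω r ⟨hr.1.le, hr.2⟩) 1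
          have h2 : (c * (1 + M ω))^p ≤ c^p * G ω / cN := by
            rw [ENNReal.mul_rpow_of_nonneg _ _ hp0, mul_div_assoc]
            apply mul_le_mul_right
            rw [ENNReal.le_div_iff_mul_le (Or.inl hcN0) (Or.inl hcNtop)]
            have hGsplit : G ω = (1 + M ω)^p * (1 + M ω)^p := by
              rw [hGdef]
              simp only []
              rw [two_mul, ENNReal.rpow_add_of_nonneg _ _ hp0 hp0]
            rw [hGsplit]
            exact mul_le_mul_right
              (ENNReal.rpow_le_rpow (add_le_add_right hsM 1) hp0) _
          exact h1.trans h2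
      calc (∫⁻ r in Set.Ioc (0:ℝ) t,
          ENNReal.ofReal (|gn n (X r ω) - g (X r ω)| ^ p) ∂volume)
          ≤ ∫⁻ r in Set.Ioc (0:ℝ) t,
            (Set.indicator {q : ℝ × Ω | ∀ s ∈ Set.Icc (0:ℝ) q.1, ‖X s q.2‖ ≤ N}
              (fun q => ENNReal.ofReal (hh n (X q.1 q.2))) (r, ω)
              + c^p * G ω / cN) ∂volume :=
            setLIntegral_mono' measurableSet_Ioc hptw
      _ = (∫⁻ r in Set.Ioc (0:ℝ) t,
            Set.indicator {q : ℝ × Ω | ∀ s ∈ Set.Icc (0:ℝ) q.1, ‖X s q.2‖ ≤ N}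
              (fun q => ENNReal.ofReal (hh n (X q.1 q.2))) (r, ω) ∂volume)
            + (c^p * G ω / cN) * ENNReal.ofReal t := by
          rw [lintegral_add_right _ measurable_const, setLIntegral_const,
            Real.volume_Ioc, sub_zero]
    calc (∫⁻ ω, ∫⁻ r in Set.Ioc (0:ℝ) t,
          ENNReal.ofReal (|gn n (X r ω) - g (X r ω)| ^ p) ∂volume ∂μ)
        ≤ ∫⁻ ω, ((∫⁻ r in Set.Ioc (0:ℝ) t,
            Set.indicator {q : ℝ × Ω | ∀ s ∈ Set.Icc (0:ℝ) q.1, ‖X s q.2‖ ≤ N}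
              (fun q => ENNReal.ofReal (hh n (X q.1 q.2))) (r, ω) ∂volume)
            + (c^p * G ω / cN) * ENNReal.ofReal t) ∂μ := lintegral_mono inner
    _ = (∫⁻ ω, ∫⁻ r in Set.Ioc (0:ℝ) t,
            Set.indicator {q : ℝ × Ω | ∀ s ∈ Set.Icc (0:ℝ) q.1, ‖X s q.2‖ ≤ N}
              (fun q => ENNReal.ofReal (hh n (X q.1 q.2))) (r, ω) ∂volume ∂μ)
          + ∫⁻ ω, (c^p * G ω / cN) * ENNReal.ofReal t ∂μ := by
        rw [lintegral_add_right]
        exact ((hG_meas.const_mul _).div_const _).mul_const _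
    _ = (∫⁻ ω, ∫⁻ r in Set.Ioc (0:ℝ) t,
            Set.indicator {q : ℝ × Ω | ∀ s ∈ Set.Icc (0:ℝ) q.1, ‖X s q.2‖ ≤ N}
              (fun q => ENNReal.ofReal (hh n (X q.1 q.2))) (r, ω) ∂volume ∂μ)
          + E / cN := by
        congr 1
        have hrw : (fun ω => (c^p * G ω / cN) * ENNReal.ofReal t)
            = fun ω => (c^p / cN * ENNReal.ofReal t) * G ω := by
          funext ω
          simp only [div_eq_mul_inv]
          ring
        rw [hrw, lintegral_const_mul' _ _
          (by
            apply ENNReal.mul_ne_top _ ENNReal.ofReal_ne_top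
            exact (ENNReal.div_lt_top
              (ENNReal.rpow_ne_top_of_nonneg hp0 ENNReal.ofReal_ne_top) hcN0).ne)]
        rw [hEdef]
        simp only [div_eq_mul_inv]
        ring
  -- Krylov bound on the main term
  have hmainbd : (∫⁻ ω, ∫⁻ r in Set.Ioc (0:ℝ) t,
        Set.indicator {q : ℝ × Ω | ∀ s ∈ Set.Icc (0:ℝ) q.1, ‖X s q.2‖ ≤ N}
          (fun q => ENNReal.ofReal (hh n (X q.1 q.2))) (r, ω) ∂volume ∂μ)
      ≤ ε / 2 := by
    have hk := hKry (hh n) (hh_meas n) (hh_nonneg n) (hh_supp n)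
    rw [hhi n] at hk
    have hCn : (∫⁻ x in closedBall (0 : EuclideanSpace ℝ (Fin (d + 1))) N,
        ENNReal.ofReal (|gn n x - g x| ^ ((d + 1 : ℝ) * p))) ≤ δ := hn0 n hn
    have hrpow : (∫⁻ x in closedBall (0 : EuclideanSpace ℝ (Fin (d + 1))) N,
        ENNReal.ofReal (|gn n x - g x| ^ ((d + 1 : ℝ) * p))) ^ (1 / ((d:ℝ) + 1))
        ≤ (ε/2) / (ENNReal.ofReal K + 1) := by
      calc _ ≤ δ ^ (1 / ((d:ℝ) + 1)) := ENNReal.rpow_le_rpow hCn (by positivity)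
      _ = ((ε/2) / (ENNReal.ofReal K + 1)) ^ (((d:ℝ) + 1) * (1 / ((d:ℝ) + 1))) := by
          rw [hδdef, ← ENNReal.rpow_mul]
      _ = (ε/2) / (ENNReal.ofReal K + 1) := by
          rw [mul_one_div_cancel hd1.ne', ENNReal.rpow_one]
    calc (∫⁻ ω, ∫⁻ r in Set.Ioc (0:ℝ) t,
        Set.indicator {q : ℝ × Ω | ∀ s ∈ Set.Icc (0:ℝ) q.1, ‖X s q.2‖ ≤ N}
          (fun q => ENNReal.ofReal (hh n (X q.1 q.2))) (r, ω) ∂volume ∂μ)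
        ≤ ENNReal.ofReal K *
          (∫⁻ x in closedBall (0 : EuclideanSpace ℝ (Fin (d + 1))) N,
            ENNReal.ofReal (|gn n x - g x| ^ ((d + 1 : ℝ) * p))) ^ (1 / ((d:ℝ) + 1)) := by
          exact hk
    _ ≤ ENNReal.ofReal K * ((ε/2) / (ENNReal.ofReal K + 1)) := mul_le_mul_right hrpow _
    _ ≤ (ENNReal.ofReal K + 1) * ((ε/2) / (ENNReal.ofReal K + 1)) :=
          mul_le_mul_left le_self_add _
    _ = ε / 2 := ENNReal.mul_div_cancel (by simp) (by simp [ENNReal.add_ne_top])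
  calc (∫⁻ ω, ∫⁻ r in Set.Ioc (0:ℝ) t,
        ENNReal.ofReal (|gn n (X r ω) - g (X r ω)| ^ p) ∂volume ∂μ)
      ≤ (∫⁻ ω, ∫⁻ r in Set.Ioc (0:ℝ) t,
          Set.indicator {q : ℝ × Ω | ∀ s ∈ Set.Icc (0:ℝ) q.1, ‖X s q.2‖ ≤ N}
            (fun q => ENNReal.ofReal (hh n (X q.1 q.2))) (r, ω) ∂volume ∂μ) + E / cN := key
  _ ≤ ε / 2 + ε / 2 := add_le_add hmainbd htail
  _ = ε := ENNReal.add_halves ε
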